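/- The map b̃_π : ℝ^{4n+3} → ℝ^{4n+3} given by b̃_π(t, q^i, p, p_i, q̇^i, ṗ, ṗ_i) = (t, q^i, p, p_i, −ṗ, −ṗ_i, q̇^i) is a diffeomorphism satisfying b̃_π*Φ = −Ω, where Ω = dt ∧ dṗ + Σ_i (dq^i ∧ dṗ_i + dq̇^i ∧ dp_i) in the source coordinates and Φ = dt ∧ dP_t + Σ_i (dq^i ∧ dP_{q^i} + dp_i ∧ dP_{p_i}) in target coordinates (t, q^i, p, p_i, P_t, P_{q^i}, P_{p_i}). -/
import Mathlib

open scoped BigOperators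

namespace Stmt18

/-- `ℝ^{4n+3}`, source coordinates `(t, q^i, p, p_i, q̇^i, ṗ, ṗ_i)`. -/
abbrev F (n : ℕ) :=
  ℝ × (Fin n → ℝ) × ℝ × (Fin n → ℝ) × (Fin n → ℝ) × ℝ × (Fin n → ℝ)

/-- `ℝ^{4n+3}`, target coordinates `(t, q^i, p, p_i, P_t, P_{q^i}, P_{p_i})`. -/
abbrev G (n : ℕ) :=
  ℝ × (Fin n → ℝ) × ℝ × (Fin n → ℝ) × ℝ × (Fin n → ℝ) × (Fin n → ℝ)

/-- `Ω = dt ∧ dṗ + Σ_i (dq^i ∧ dṗ_i + dq̇^i ∧ dp_i)` in source coordinates. -/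
noncomputable def Omega (n : ℕ) (u v : F n) : ℝ :=
  (u.1 * v.2.2.2.2.2.1 - v.1 * u.2.2.2.2.2.1)
    + ∑ i : Fin n,
        ((u.2.1 i * v.2.2.2.2.2.2 i - v.2.1 i * u.2.2.2.2.2.2 i)
          + (u.2.2.2.2.1 i * v.2.2.2.1 i - v.2.2.2.2.1 i * u.2.2.2.1 i))

/-- `Φ = dt ∧ dP_t + Σ_i (dq^i ∧ dP_{q^i} + dp_i ∧ dP_{p_i})` in target coordinates. -/
noncomputable def Phi (n : ℕ) (u v : G n) : ℝ :=
  (u.1 * v.2.2.2.2.1 - v.1 * u.2.2.2.2.1)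
    + ∑ i : Fin n,
        ((u.2.1 i * v.2.2.2.2.2.1 i - v.2.1 i * u.2.2.2.2.2.1 i)
          + (u.2.2.2.1 i * v.2.2.2.2.2.2 i - v.2.2.2.1 i * u.2.2.2.2.2.2 i))

/-- `b̃_π(t, q, p, p_i, q̇, ṗ, ṗ_i) = (t, q, p, p_i, −ṗ, −ṗ_i, q̇)`. -/
def btilde (n : ℕ) (x : F n) : G n :=
  (x.1, x.2.1, x.2.2.1, x.2.2.2.1, -x.2.2.2.2.2.1, -x.2.2.2.2.2.2, x.2.2.2.2.1)

def btildeInv (n : ℕ) (y : G n) : F n :=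
  (y.1, y.2.1, y.2.2.1, y.2.2.2.1, y.2.2.2.2.2.2, -y.2.2.2.2.1, -y.2.2.2.2.2.1)

/-- `b̃_π` is a diffeomorphism (a linear bijection) satisfying `b̃_π*Φ = −Ω`. -/
theorem btilde_anti_presymplectic (n : ℕ) :
    Function.Bijective (btilde n) ∧
    (∀ u v : F n, Phi n (btilde n u) (btilde n v) = -Omega n u v) := by
  constructor
  · exact Function.bijective_iff_has_inverse.mpr
      ⟨btildeInv n, fun x => by simp [btilde, btildeInv], fun y => by simp [btilde, btildeInv]⟩
  · intro u v
    simp only [Phi, Omega, btilde, neg_add, ← Finset.sum_neg_distrib]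
    congr 1
    · ring
    · exact Finset.sum_congr rfl fun i _ => by simp only [Pi.neg_apply]; ring
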